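/- Let 0 < σ < n/2, e ∈ ℝ^n nonzero, R > 0 with R|e| > 10, and set U(y) = (1 + |y − Re|²)^{−(n−2σ)/2} and λ₁ = R|e| + 2. Then for all y with |y| > λ₁, one has U(y) − U^{λ₁}(y) < 0, where U^{λ}(y) = (λ/|y|)^{n−2σ}·U(λ²y/|y|²). -/

import Mathlib

theorem stmt_8 (n : ℕ) (σ : ℝ) (hσ : 0 < σ) (hn : 2 * σ < n)
    (e : EuclideanSpace ℝ (Fin n)) (he : e ≠ 0) (R : ℝ) (hR : 0 < R) (hRe : 10 < R * ‖e‖)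
    (U : EuclideanSpace ℝ (Fin n) → ℝ)
    (hU : ∀ y, U y = (1 + ‖y - R • e‖ ^ 2) ^ (-(((n : ℝ) - 2 * σ) / 2)))
    (lam₁ : ℝ) (hlam₁ : lam₁ = R * ‖e‖ + 2) :
    ∀ y : EuclideanSpace ℝ (Fin n), lam₁ < ‖y‖ →
      U y - (lam₁ / ‖y‖) ^ ((n : ℝ) - 2 * σ) * U ((lam₁ ^ 2 / ‖y‖ ^ 2) • y) < 0 := by
  intro y hy
  set p : ℝ := (n : ℝ) - 2 * σ with hpdef
  have hp : 0 < p := by simp only [hpdef]; linarith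
  have hl : 0 < lam₁ := by rw [hlam₁]; positivity
  have hyn : 0 < ‖y‖ := lt_trans hl hy
  set t : ℝ := inner ℝ y e with ht
  have hA : ‖y - R • e‖ ^ 2 = ‖y‖ ^ 2 - 2 * (R * t) + R ^ 2 * ‖e‖ ^ 2 := by
    rw [@norm_sub_sq_real, real_inner_smul_right, norm_smul, Real.norm_eq_abs,
      abs_of_pos hR, mul_pow]
  have hA' : ‖(lam₁ ^ 2 / ‖y‖ ^ 2) • y - R • e‖ ^ 2 =
      (lam₁ ^ 2 / ‖y‖ ^ 2) ^ 2 * ‖y‖ ^ 2 - 2 * ((lam₁ ^ 2 / ‖y‖ ^ 2) * (R * t))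
        + R ^ 2 * ‖e‖ ^ 2 := by
    rw [@norm_sub_sq_real, real_inner_smul_left, real_inner_smul_right, norm_smul,
      norm_smul, Real.norm_eq_abs, Real.norm_eq_abs, abs_of_pos hR,
      abs_of_pos (by positivity : (0:ℝ) < lam₁ ^ 2 / ‖y‖ ^ 2), mul_pow, mul_pow]
  set A : ℝ := 1 + ‖y - R • e‖ ^ 2 with hAdef
  set A' : ℝ := 1 + ‖(lam₁ ^ 2 / ‖y‖ ^ 2) • y - R • e‖ ^ 2 with hA'def
  have hApos : 0 < A := by positivity
  have hA'pos : 0 < A' := by positivity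
  set B : ℝ := (‖y‖ ^ 2 / lam₁ ^ 2) * A' with hBdef
  have hBpos : 0 < B := by positivity
  -- key inequality B < A
  have hBA : B < A := by
    have key : lam₁ ^ 2 * B = ‖y‖ ^ 2 + lam₁ ^ 4 - 2 * (lam₁ ^ 2 * (R * t))
        + R ^ 2 * ‖e‖ ^ 2 * ‖y‖ ^ 2 := by
      rw [hBdef, hA'def, hA']
      field_simp
      ring
    have hmul : lam₁ ^ 2 * B < lam₁ ^ 2 * A := by
      rw [key, hAdef, hA, hlam₁]
      have hy' : R * ‖e‖ + 2 < ‖y‖ := by rwa [hlam₁] at hy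
      have hs : 0 < ‖y‖ ^ 2 - (R * ‖e‖ + 2) ^ 2 := by nlinarith
      nlinarith [mul_pos hs (show (0:ℝ) < 4 * (R * ‖e‖) + 3 by linarith)]
    exact lt_of_mul_lt_mul_left hmul (by positivity)
  -- rewrite the Kelvin factor
  have hfac : (lam₁ / ‖y‖) ^ p * A' ^ (-(p / 2)) = B ^ (-(p / 2)) := by
    rw [hBdef, Real.mul_rpow (by positivity) (le_of_lt hA'pos)]
    congr 1
    have h1 : ‖y‖ ^ 2 / lam₁ ^ 2 = (‖y‖ / lam₁) ^ 2 := by rw [div_pow]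
    rw [h1, ← Real.rpow_natCast (‖y‖ / lam₁) 2, ← Real.rpow_mul (by positivity)]
    rw [show ((2:ℕ):ℝ) * -(p / 2) = -p by push_cast; ring]
    rw [Real.rpow_neg (by positivity), ← Real.inv_rpow (by positivity),
      inv_div]
  rw [hU, hU, sub_neg, ← hAdef, ← hA'def, hfac]
  exact Real.rpow_lt_rpow_of_neg hBpos hBA (by linarith)
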